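/- Let f : X → Y be a continuous surjection of compact Hausdorff spaces. Then the map I(f) : I(X) → I(Y) is open if and only if f is open. -/

import Mathlib

/-- `μ : C(X, ℝ) → ℝ` is an idempotent probability measure. -/
def IsIPM {X : Type*} [TopologicalSpace X] (μ : C(X, ℝ) → ℝ) : Prop :=
  (∀ c : ℝ, μ (ContinuousMap.const X c) = c) ∧
  (∀ (φ : C(X, ℝ)) (c : ℝ), μ (φ + ContinuousMap.const X c) = μ φ + c) ∧
  (∀ φ ψ : C(X, ℝ), μ (φ ⊔ ψ) = max (μ φ) (μ ψ))

/-- `μ` is supported on the set `F`. -/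
def IPMSupportedOn {X : Type*} [TopologicalSpace X] (μ : C(X, ℝ) → ℝ) (F : Set X) : Prop :=
  ∀ φ ψ : C(X, ℝ), (∀ x ∈ F, φ x = ψ x) → μ φ = μ ψ

/-- The support of `μ`. -/
def IPMsupport {X : Type*} [TopologicalSpace X] (μ : C(X, ℝ) → ℝ) : Set X :=
  ⋂₀ {F : Set X | IsClosed F ∧ IPMSupportedOn μ F}

/-- The pushforward `I(f)`. -/
def IPMmap {X Y : Type*} [TopologicalSpace X] [TopologicalSpace Y]
    (f : C(X, Y)) (μ : C(X, ℝ) → ℝ) : C(Y, ℝ) → ℝ :=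
  fun ψ => μ (ψ.comp f)

/-- The max-plus combination `α⊙μ₁ ⊕ β⊙μ₂`. -/
def mpComb {X : Type*} [TopologicalSpace X] (α β : ℝ) (μ₁ μ₂ : C(X, ℝ) → ℝ) :
    C(X, ℝ) → ℝ :=
  fun φ => max (α + μ₁ φ) (β + μ₂ φ)

/-- The Dirac measure `δ_x`. -/
def IPMdirac {X : Type*} [TopologicalSpace X] (x : X) : C(X, ℝ) → ℝ := fun φ => φ x

/-- `μ` is a finitely supported idempotent probability measure of the form
`λ₁⊙δ_{x₁} ⊕ … ⊕ λ_s⊙δ_{x_s}` with all the points `xᵢ` in `Y`. -/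
def IsFinSuppIPM {X : Type*} [TopologicalSpace X] (Y : Set X) (μ : C(X, ℝ) → ℝ) : Prop :=
  ∃ (n : ℕ) (x : Fin (n + 1) → X) (lam : Fin (n + 1) → ℝ),
    (∀ i, x i ∈ Y) ∧
    Finset.univ.sup' Finset.univ_nonempty lam = 0 ∧
    μ = fun φ => Finset.univ.sup' Finset.univ_nonempty fun i => lam i + φ (x i)

/-- `I_β(X)`: idempotent probability measures on `βX` with support in (the image of) `X`. -/
def IBeta (X : Type*) [TopologicalSpace X] : Set (C(StoneCech X, ℝ) → ℝ) :=
  {μ | IsIPM μ ∧ IPMsupport μ ⊆ Set.range (stoneCechUnit : X → StoneCech X)}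

set_option linter.unusedSectionVars false
set_option maxHeartbeats 1000000

section Helpers
variable {X : Type*} [TopologicalSpace X]

lemma IsIPM.mono {μ : C(X,ℝ) → ℝ} (hμ : IsIPM μ) {φ ψ : C(X,ℝ)} (h : φ ≤ ψ) :
    μ φ ≤ μ ψ := by
  have : μ ψ = max (μ φ) (μ ψ) := by rw [← hμ.2.2, sup_eq_right.2 h]
  rw [this]; exact le_max_left _ _

lemma IsIPM.zero {μ : C(X,ℝ) → ℝ} (hμ : IsIPM μ) : μ 0 = 0 := by
  have : (0 : C(X,ℝ)) = ContinuousMap.const X 0 := by ext x; rfl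
  rw [this, hμ.1]

lemma IsIPM.nonempty {μ : C(X,ℝ) → ℝ} (hμ : IsIPM μ) : Nonempty X := by
  by_contra h
  have he : IsEmpty X := not_nonempty_iff.1 h
  have : ContinuousMap.const X (0:ℝ) = ContinuousMap.const X 1 := by
    ext x; exact absurd trivial (he.elim x)
  have h0 := hμ.1 0
  have h1 := hμ.1 1
  rw [this] at h0; rw [h1] at h0; norm_num at h0

lemma isIPM_dirac (x : X) : IsIPM (fun φ : C(X,ℝ) => φ x) := by
  refine ⟨fun c => rfl, fun φ c => rfl, fun φ ψ => ?_⟩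
  simp

lemma IsIPM.map {Y : Type*} [TopologicalSpace Y] {μ : C(X,ℝ) → ℝ} (hμ : IsIPM μ)
    (f : C(X,Y)) : IsIPM (IPMmap f μ) := by
  refine ⟨fun c => ?_, fun φ c => ?_, fun φ ψ => ?_⟩
  · have : (ContinuousMap.const Y c).comp f = ContinuousMap.const X c := rfl
    simp [IPMmap, this, hμ.1]
  · have : (φ + ContinuousMap.const Y c).comp f = φ.comp f + ContinuousMap.const X c := rfl
    simp [IPMmap, this, hμ.2.1]
  · have : (φ ⊔ ψ).comp f = φ.comp f ⊔ ψ.comp f := by ext x; simp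
    simp [IPMmap, this, hμ.2.2]

lemma cm_inf'_apply {ι : Type*} (s : Finset ι) (hs : s.Nonempty) (F : ι → C(X,ℝ)) (x : X) :
    (s.inf' hs F) x = s.inf' hs (fun i => F i x) := by
  induction hs using Finset.Nonempty.cons_induction with
  | singleton i => rw [Finset.inf'_singleton, Finset.inf'_singleton]
  | cons i s hi hs ih => rw [Finset.inf'_cons, Finset.inf'_cons, ContinuousMap.inf_apply, ih] <;> exact hs

lemma cm_sup'_apply {ι : Type*} (s : Finset ι) (hs : s.Nonempty) (F : ι → C(X,ℝ)) (x : X) :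
    (s.sup' hs F) x = s.sup' hs (fun i => F i x) := by
  induction hs using Finset.Nonempty.cons_induction with
  | singleton i => rw [Finset.sup'_singleton, Finset.sup'_singleton]
  | cons i s hi hs ih => rw [Finset.sup'_cons, Finset.sup'_cons, ContinuousMap.sup_apply, ih] <;> exact hs

lemma mu_sup' {ι : Type*} {μ : C(X,ℝ) → ℝ} (hμ : IsIPM μ) (s : Finset ι) (hs : s.Nonempty)
    (F : ι → C(X,ℝ)) : μ (s.sup' hs F) = s.sup' hs (fun i => μ (F i)) := by
  induction hs using Finset.Nonempty.cons_induction with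
  | singleton i => rw [Finset.sup'_singleton, Finset.sup'_singleton]
  | cons i s hi hs ih => rw [Finset.sup'_cons, Finset.sup'_cons, hμ.2.2, ih] <;> exact hs

lemma cm_neg_inf' {ι : Type*} (s : Finset ι) (hs : s.Nonempty) (F : ι → C(X,ℝ)) :
    -(s.inf' hs F) = s.sup' hs (fun i => -(F i)) := by
  induction hs using Finset.Nonempty.cons_induction with
  | singleton i => rw [Finset.inf'_singleton, Finset.sup'_singleton]
  | cons i s hi hs ih => rw [Finset.inf'_cons, Finset.sup'_cons, neg_inf, ih] <;> exact hs

lemma exists_maximal_point [CompactSpace X] {μ : C(X,ℝ) → ℝ} (hμ : IsIPM μ)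
    (hne : Nonempty X) (φ : C(X,ℝ)) :
    ∃ x : X, ∀ g : C(X,ℝ), μ φ - φ x ≤ μ g - g x := by
  by_contra h
  push_neg at h
  have hcov : ∀ x : X, ∃ g : C(X,ℝ), x ∈ {x' | φ x' - μ φ < g x' - μ g} := by
    intro x
    obtain ⟨g, hg⟩ := h x
    exact ⟨g, by simp only [Set.mem_setOf_eq]; linarith⟩
  have hopen : ∀ g : C(X,ℝ), IsOpen {x' | φ x' - μ φ < g x' - μ g} := fun g =>
    isOpen_lt (by continuity) (by continuity)
  have hcover : Set.univ ⊆ ⋃ g : C(X,ℝ), {x' | φ x' - μ φ < g x' - μ g} := by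
    intro x _
    obtain ⟨g, hg⟩ := hcov x
    exact Set.mem_iUnion.2 ⟨g, hg⟩
  obtain ⟨S, hS⟩ := isCompact_univ.elim_finite_subcover _ hopen hcover
  have hSne : S.Nonempty := by
    rcases S.eq_empty_or_nonempty with hc | hc
    · exfalso
      obtain ⟨x⟩ := hne
      have := hS (Set.mem_univ x)
      simp [hc] at this
    · exact hc
  set hfun := S.sup' hSne (fun g => g - ContinuousMap.const X (μ g)) with hh
  have hmu : μ hfun = 0 := by
    rw [mu_sup' hμ]
    have : ∀ g ∈ S, μ (g - ContinuousMap.const X (μ g)) = 0 := by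
      intro g _
      have : g - ContinuousMap.const X (μ g) = g + ContinuousMap.const X (-(μ g)) := by
        ext x; simp; ring
      rw [this, hμ.2.1]; ring
    rw [Finset.sup'_congr hSne rfl this]
    simp
  have hpt : ∀ x : X, φ x - μ φ < hfun x := by
    intro x
    have := hS (Set.mem_univ x)
    simp only [Set.mem_iUnion] at this
    obtain ⟨g, hgS, hg⟩ := this
    have hle : g x - μ g ≤ hfun x := by
      rw [hh, cm_sup'_apply]
      exact Finset.le_sup' (f := fun g => (g - ContinuousMap.const X (μ g)) x) hgS |>.trans_eq rfl
        |>.trans_eq' (by simp)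
    calc φ x - μ φ < g x - μ g := hg
    _ ≤ hfun x := hle
  obtain ⟨xm, _, hxm⟩ := isCompact_univ.exists_isMinOn (Set.univ_nonempty)
    ((hfun.continuous.sub φ.continuous).continuousOn (s := Set.univ))
  set η := hfun xm - φ xm + μ φ with hη
  have hηpos : 0 < η := by have := hpt xm; simp only [hη]; linarith
  have hle : φ + ContinuousMap.const X (η - μ φ) ≤ hfun := by
    intro x
    have hmin : hfun xm - φ xm ≤ hfun x - φ x := hxm (Set.mem_univ x)
    show φ x + (η - μ φ) ≤ hfun x
    simp only [hη]
    linarith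
  have := hμ.mono hle
  rw [hμ.2.1] at this
  rw [hmu] at this
  linarith

lemma exists_phi_data [CompactSpace X] [T2Space X] {Y : Type*} [TopologicalSpace Y] [T2Space Y]
    (f : C(X, Y)) {μ : C(X,ℝ) → ℝ} (hμ : IsIPM μ) (hne : Nonempty X)
    (φ : C(X,ℝ)) {ε : ℝ} (hε : 0 < ε) :
    ∃ (xs : X) (G : Finset C(X,ℝ)) (xb : X) (m : ℝ),
      (∀ g : C(X,ℝ), μ φ - φ xs ≤ μ g - g xs) ∧ f xb = f xs ∧
      (∀ x, f x = f xs → ∃ g ∈ G, μ g - g x < m + ε/2) ∧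
      (∀ g : C(X,ℝ), m - ε/2 < μ g - g xb) := by
  classical
  obtain ⟨xs, hxs⟩ := exists_maximal_point hμ hne φ
  set lamE : X → EReal := fun x => ⨅ g : C(X,ℝ), ((μ g - g x : ℝ) : EReal) with hlamE
  have hlam_le : ∀ (x : X) (g : C(X,ℝ)), lamE x ≤ ((μ g - g x : ℝ) : EReal) :=
    fun x g => iInf_le _ g
  have hlam0 : ∀ x : X, lamE x ≤ 0 := by
    intro x
    have := hlam_le x 0
    have h0 : μ (0 : C(X,ℝ)) - (0 : C(X,ℝ)) x = 0 := by simp [hμ.zero]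
    rw [h0] at this
    exact this.trans_eq (by norm_num)
  set mE : EReal := ⨆ x : {x : X // f x = f xs}, lamE x.1 with hmE
  have hrle : ((μ φ - φ xs : ℝ) : EReal) ≤ mE := by
    refine le_trans ?_ (le_iSup _ ⟨xs, rfl⟩)
    exact le_iInf fun g => EReal.coe_le_coe_iff.2 (hxs g)
  have hm0 : mE ≤ 0 := iSup_le fun x => hlam0 x.1
  have hmtop : mE ≠ ⊤ := fun h => by
    rw [h] at hm0
    exact absurd hm0 (by norm_num)
  have hmbot : mE ≠ ⊥ := fun h => by
    rw [h, le_bot_iff] at hrle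
    exact EReal.coe_ne_bot _ hrle
  set m : ℝ := mE.toReal with hm
  have hmE_eq : (m : EReal) = mE := EReal.coe_toReal hmtop hmbot
  have hlt : ((m - ε/2 : ℝ) : EReal) < mE := by
    rw [← hmE_eq]
    exact EReal.coe_lt_coe_iff.2 (by linarith)
  rw [hmE, lt_iSup_iff] at hlt
  obtain ⟨⟨xb, hxb⟩, hxblt⟩ := hlt
  have hxbprop : ∀ g : C(X,ℝ), m - ε/2 < μ g - g xb := by
    intro g
    have := lt_of_lt_of_le hxblt (hlam_le xb g)
    exact EReal.coe_lt_coe_iff.1 this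
  have hcov : ∀ x, f x = f xs → ∃ g : C(X,ℝ), μ g - g x < m + ε/2 := by
    intro x hx
    have h1 : lamE x ≤ mE := le_iSup (fun x : {x : X // f x = f xs} => lamE x.1) ⟨x, hx⟩
    have h2 : lamE x < ((m + ε/2 : ℝ) : EReal) := by
      refine lt_of_le_of_lt h1 ?_
      rw [← hmE_eq]
      exact EReal.coe_lt_coe_iff.2 (by linarith)
    rw [hlamE] at h2
    simp only [iInf_lt_iff] at h2
    obtain ⟨g, hg⟩ := h2
    exact ⟨g, EReal.coe_lt_coe_iff.1 hg⟩
  have hKcl : IsClosed (⇑f ⁻¹' {f xs}) := isClosed_singleton.preimage f.continuous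
  have hK : IsCompact (⇑f ⁻¹' {f xs}) := hKcl.isCompact
  have hsub : (⇑f ⁻¹' {f xs}) ⊆ ⋃ g : C(X,ℝ), {x | μ g - g x < m + ε/2} := by
    intro x hx
    obtain ⟨g, hg⟩ := hcov x hx
    exact Set.mem_iUnion.2 ⟨g, hg⟩
  obtain ⟨G, hG⟩ := hK.elim_finite_subcover _
    (fun g : C(X,ℝ) => isOpen_lt (by continuity) continuous_const) hsub
  refine ⟨xs, G, xb, m, hxs, hxb, ?_, hxbprop⟩
  intro x hx
  have := hG hx
  simp only [Set.mem_iUnion, Set.mem_setOf_eq] at this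
  obtain ⟨g, hgG, hg⟩ := this
  exact ⟨g, hgG, hg⟩
end Helpers

section FiberMax
variable {X Y : Type*} [TopologicalSpace X] [CompactSpace X] [T2Space X]
  [TopologicalSpace Y] [CompactSpace Y] [T2Space Y]
  (f : C(X, Y))

noncomputable def fiberMax (g : C(X,ℝ)) (y : Y) : ℝ := sSup (⇑g '' (⇑f ⁻¹' {y}))

lemma fiberMax_exists_greatest (hsurj : Function.Surjective f) (g : C(X,ℝ)) (y : Y) :
    ∃ x : X, f x = y ∧ (∀ x', f x' = y → g x' ≤ g x) ∧ fiberMax f g y = g x := by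
  have hcl : IsClosed (⇑f ⁻¹' {y}) := (isClosed_singleton).preimage f.continuous
  have hK : IsCompact (⇑f ⁻¹' {y}) := hcl.isCompact
  obtain ⟨x0, hx0⟩ := hsurj y
  have hne : (⇑f ⁻¹' {y}).Nonempty := ⟨x0, hx0⟩
  obtain ⟨x, hx, hmax⟩ := hK.exists_isMaxOn hne g.continuous.continuousOn
  refine ⟨x, hx, fun x' hx' => hmax hx', ?_⟩
  apply IsGreatest.csSup_eq
  exact ⟨⟨x, hx, rfl⟩, fun v ⟨x', hx', hv⟩ => hv ▸ hmax hx'⟩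

lemma le_fiberMax (hsurj : Function.Surjective f) (g : C(X,ℝ)) {x : X} {y : Y}
    (hx : f x = y) : g x ≤ fiberMax f g y := by
  obtain ⟨x1, hx1, hm, he⟩ := fiberMax_exists_greatest f hsurj g y
  rw [he]; exact hm x hx

lemma fiberMax_le (hsurj : Function.Surjective f) (g : C(X,ℝ)) {y : Y} {b : ℝ}
    (h : ∀ x, f x = y → g x ≤ b) : fiberMax f g y ≤ b := by
  obtain ⟨x1, hx1, hm, he⟩ := fiberMax_exists_greatest f hsurj g y
  rw [he]; exact h x1 hx1

lemma fiberMax_add_comp (hsurj : Function.Surjective f) (g : C(X,ℝ)) (ψ : C(Y,ℝ)) (y : Y) :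
    fiberMax f (g + ψ.comp f) y = fiberMax f g y + ψ y := by
  refine le_antisymm (fiberMax_le f hsurj _ fun x hx => ?_) ?_
  · simp only [ContinuousMap.add_apply, ContinuousMap.comp_apply, hx]
    exact add_le_add_left (le_fiberMax f hsurj g hx) _
  · obtain ⟨x1, hx1, hm, he⟩ := fiberMax_exists_greatest f hsurj g y
    have := le_fiberMax f hsurj (g + ψ.comp f) hx1
    simpa [he, hx1] using this

lemma fiberMax_sup (hsurj : Function.Surjective f) (g h : C(X,ℝ)) (y : Y) :
    fiberMax f (g ⊔ h) y = max (fiberMax f g y) (fiberMax f h y) := by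
  refine le_antisymm (fiberMax_le f hsurj _ fun x hx => ?_) (max_le ?_ ?_)
  · simp only [ContinuousMap.sup_apply]
    exact max_le_max (le_fiberMax f hsurj g hx) (le_fiberMax f hsurj h hx)
  · exact fiberMax_le f hsurj g fun x hx =>
      le_trans (by simp [ContinuousMap.sup_apply, le_max_left]) (le_fiberMax f hsurj (g ⊔ h) hx)
  · exact fiberMax_le f hsurj h fun x hx =>
      le_trans (by simp [ContinuousMap.sup_apply, le_max_right]) (le_fiberMax f hsurj (g ⊔ h) hx)

lemma continuous_fiberMax (hsurj : Function.Surjective f) (hopen : IsOpenMap f)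
    (g : C(X,ℝ)) : Continuous (fiberMax f g) := by
  rw [continuous_iff_continuousAt]
  intro y0
  rw [ContinuousAt, Metric.tendsto_nhds]
  intro ε hε
  obtain ⟨x0, hx0, hm0, he0⟩ := fiberMax_exists_greatest f hsurj g y0
  set t := fiberMax f g y0 with ht
  set A : Set X := {x | g x < t + ε/2} with hA
  have hAopen : IsOpen A := isOpen_lt g.continuous continuous_const
  have hW1 : IsOpen ((⇑f '' Aᶜ)ᶜ) := by
    have : IsCompact (⇑f '' Aᶜ) := (hAopen.isClosed_compl.isCompact).image f.continuous
    exact this.isClosed.isOpen_compl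
  have hW2 : IsOpen (⇑f '' {x | t - ε/2 < g x}) :=
    hopen _ (isOpen_lt continuous_const g.continuous)
  have hy1 : y0 ∈ (⇑f '' Aᶜ)ᶜ := by
    rintro ⟨x, hx, hfx⟩
    refine hx ?_
    have := hm0 x hfx
    simp only [hA, Set.mem_setOf_eq]
    rw [← he0] at *
    linarith
  have hy2 : y0 ∈ ⇑f '' {x | t - ε/2 < g x} :=
    ⟨x0, by simp only [Set.mem_setOf_eq, ← he0]; linarith, hx0⟩
  filter_upwards [hW1.mem_nhds hy1, hW2.mem_nhds hy2] with y h1 h2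
  have hub : fiberMax f g y ≤ t + ε/2 := by
    refine fiberMax_le f hsurj g fun x hx => ?_
    by_contra hgt
    exact h1 ⟨x, fun hxA => hgt (le_of_lt hxA), hx⟩
  have hlb : t - ε/2 < fiberMax f g y := by
    obtain ⟨x, hxg, hfx⟩ := h2
    exact lt_of_lt_of_le hxg (le_fiberMax f hsurj g hfx)
  rw [Real.dist_eq, abs_sub_lt_iff]
  constructor <;> linarith

/-- The conditional lift operator. -/
lemma exists_lift_operator (hsurj : Function.Surjective f) (hopen : IsOpenMap f)
    {μ : C(X,ℝ) → ℝ} (hμ : IsIPM μ) (Φ : Finset C(X,ℝ)) {ε : ℝ} (hε : 0 < ε) :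
    ∃ T : C(X,ℝ) → C(Y,ℝ),
      (∀ ψ : C(Y,ℝ), T (ψ.comp f) = ψ) ∧
      (∀ (φ : C(X,ℝ)) (c : ℝ), T (φ + ContinuousMap.const X c) = T φ + ContinuousMap.const Y c) ∧
      (∀ φ φ' : C(X,ℝ), T (φ ⊔ φ') = T φ ⊔ T φ') ∧
      (∀ φ ∈ Φ, |μ ((T φ).comp f) - μ φ| < ε) := by
  classical
  have hne : Nonempty X := hμ.nonempty
  -- data for each φ
  choose xs Gf xb m hxs hfxb hcov hxb using
    fun φ : C(X,ℝ) => exists_phi_data f hμ hne φ hε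
  set G : Finset C(X,ℝ) := Φ ∪ Φ.biUnion Gf with hGdef
  set S : Finset C(X,ℝ) := insert 0 (G.image fun g => ContinuousMap.const X (μ g) - g)
    with hSdef
  have hSne : S.Nonempty := ⟨0, Finset.mem_insert_self _ _⟩
  set lam : C(X,ℝ) := S.inf' hSne id with hlamdef
  -- lam ≤ μ g - g for g ∈ G
  have hlam_le : ∀ g ∈ G, ∀ x : X, lam x ≤ μ g - g x := by
    intro g hg x
    have hmem : ContinuousMap.const X (μ g) - g ∈ S :=
      Finset.mem_insert_of_mem (Finset.mem_image_of_mem _ hg)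
    have h1 := Finset.inf'_le (id : C(X,ℝ) → C(X,ℝ)) hmem
    have h2 := ContinuousMap.le_def.1 h1 x
    simpa only [id_eq, ContinuousMap.sub_apply, ContinuousMap.coe_const,
      Function.const_apply] using h2
  have hlam0 : ∀ x : X, lam x ≤ 0 := by
    intro x
    have h1 := Finset.inf'_le (s := S) (id : C(X,ℝ) → C(X,ℝ)) (Finset.mem_insert_self 0 _)
    have h2 := ContinuousMap.le_def.1 h1 x
    simpa only [id_eq, ContinuousMap.zero_apply] using h2
  -- μ (-lam) = 0
  have hmuneg : μ (-lam) = 0 := by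
    rw [hlamdef, cm_neg_inf', mu_sup' hμ]
    have hz : ∀ h ∈ S, μ (-h) = 0 := by
      intro h hh
      rcases Finset.mem_insert.1 hh with h0 | himg
      · rw [h0, neg_zero, hμ.zero]
      · obtain ⟨g, hg, rfl⟩ := Finset.mem_image.1 himg
        have : -(ContinuousMap.const X (μ g) - g) = g + ContinuousMap.const X (-(μ g)) := by
          ext x; simp; ring
        rw [this, hμ.2.1]; ring
    have : ∀ h ∈ S, μ (-(id h)) = 0 := fun h hh => hz h hh
    rw [Finset.sup'_congr hSne rfl this]
    simp
  -- lam at xs φ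
  have hlam_xs : ∀ φ ∈ Φ, μ φ - φ (xs φ) ≤ lam (xs φ) := by
    intro φ hφ
    rw [hlamdef, cm_inf'_apply]
    refine Finset.le_inf' _ _ ?_
    intro h hh
    rcases Finset.mem_insert.1 hh with h0 | himg
    · rw [h0]
      have := hxs φ 0
      simpa [hμ.zero] using this
    · obtain ⟨g, hg, rfl⟩ := Finset.mem_image.1 himg
      have := hxs φ g
      simpa using this
  -- the operator
  set T : C(X,ℝ) → C(Y,ℝ) := fun φ =>
    (⟨fiberMax f (lam + φ), continuous_fiberMax f hsurj hopen _⟩ : C(Y,ℝ)) -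
    (⟨fiberMax f lam, continuous_fiberMax f hsurj hopen _⟩ : C(Y,ℝ)) with hTdef
  have hTapp : ∀ (φ : C(X,ℝ)) (y : Y), T φ y = fiberMax f (lam + φ) y - fiberMax f lam y := by
    intro φ y; rw [hTdef]; rfl
  refine ⟨T, ?_, ?_, ?_, ?_⟩
  · -- lift property
    intro ψ
    ext y
    rw [hTapp, fiberMax_add_comp f hsurj]
    ring
  · -- +const
    intro φ c
    ext y
    have h1 : lam + (φ + ContinuousMap.const X c) =
        (lam + φ) + (ContinuousMap.const Y c).comp f := by
      ext x; simp [add_assoc]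
    rw [hTapp, h1, fiberMax_add_comp f hsurj]
    simp [hTapp]
    ring
  · -- sup
    intro φ φ'
    ext y
    have h1 : lam + (φ ⊔ φ') = (lam + φ) ⊔ (lam + φ') := by
      ext x
      simp only [ContinuousMap.add_apply, ContinuousMap.sup_apply]
      exact (max_add_add_left _ _ _).symm
    rw [hTapp, h1, fiberMax_sup f hsurj]
    simp only [ContinuousMap.sup_apply, hTapp]
    exact (max_sub_sub_right _ _ _).symm
  · -- estimates
    intro φ hφ
    have hφG : φ ∈ G := Finset.mem_union_left _ hφ
    -- upper bound
    have hupper : μ ((T φ).comp f) ≤ μ φ := by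
      have hptw : (T φ).comp f ≤ (-lam) + ContinuousMap.const X (μ φ) := by
        intro x
        show T φ (f x) ≤ -lam x + μ φ
        rw [hTapp]
        have h1 : fiberMax f (lam + φ) (f x) ≤ μ φ := by
          refine fiberMax_le f hsurj _ fun x' _ => ?_
          have := hlam_le φ hφG x'
          simp only [ContinuousMap.add_apply]
          linarith
        have h2 : lam x ≤ fiberMax f lam (f x) := le_fiberMax f hsurj lam rfl
        linarith
      calc μ ((T φ).comp f) ≤ μ ((-lam) + ContinuousMap.const X (μ φ)) := hμ.mono hptw
      _ = μ (-lam) + μ φ := hμ.2.1 _ _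
      _ = μ φ := by rw [hmuneg]; ring
    -- lower bound
    have hlower : μ φ - ε < μ ((T φ).comp f) := by
      have h1 := hxb φ ((T φ).comp f)
      have h2 : (T φ).comp f (xb φ) = T φ (f (xs φ)) := by
        simp [ContinuousMap.comp_apply, hfxb φ]
      have h3 : μ φ ≤ fiberMax f (lam + φ) (f (xs φ)) := by
        have := le_fiberMax f hsurj (lam + φ) (rfl : f (xs φ) = f (xs φ))
        have h4 := hlam_xs φ hφ
        simp only [ContinuousMap.add_apply] at this
        linarith
      have h5 : fiberMax f lam (f (xs φ)) ≤ m φ + ε/2 := by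
        refine fiberMax_le f hsurj lam fun x hx => ?_
        obtain ⟨g, hgG, hg⟩ := hcov φ x hx
        have hgG' : g ∈ G := Finset.mem_union_right _ (Finset.mem_biUnion.2 ⟨φ, hφ, hgG⟩)
        have := hlam_le g hgG' x
        linarith
      have h6 : μ φ - (m φ + ε/2) ≤ T φ (f (xs φ)) := by
        rw [hTapp]
        linarith
      rw [h2] at h1
      linarith
    rw [abs_sub_lt_iff]
    constructor <;> linarith

end FiberMax


section Main
variable {X Y : Type*} [TopologicalSpace X] [CompactSpace X] [T2Space X]
  [TopologicalSpace Y] [CompactSpace Y] [T2Space Y]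

theorem ipm_main (f : C(X, Y)) (hsurj : Function.Surjective f) :
    (∀ U : Set (C(X, ℝ) → ℝ), IsOpen U →
      ∃ V : Set (C(Y, ℝ) → ℝ), IsOpen V ∧
        IPMmap f '' ({μ | IsIPM μ} ∩ U) = {ν | IsIPM ν} ∩ V) ↔
    IsOpenMap f := by
  constructor
  · -- openness of I(f) implies openness of f
    intro h U hU
    rw [isOpen_iff_mem_nhds]
    rintro y0 ⟨x0, hx0U, rfl⟩
    -- Urysohn function on X
    obtain ⟨φc, hφ0, hφ1, hφicc⟩ := exists_continuous_zero_one_of_isClosed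
      (hU.isClosed_compl) (isClosed_singleton : IsClosed {x0})
      (Set.disjoint_singleton_right.mpr (by simp [hx0U]))
    set U' : Set (C(X,ℝ) → ℝ) := (fun μ : C(X,ℝ) → ℝ => μ φc) ⁻¹' (Set.Ioi 0) with hU'def
    have hU'open : IsOpen U' := (isOpen_Ioi).preimage (continuous_apply φc)
    obtain ⟨V, hVopen, hVeq⟩ := h U' hU'open
    set W : Set Y := (fun y => (fun ψ : C(Y,ℝ) => ψ y)) ⁻¹' V with hWdef
    have hWopen : IsOpen W := hVopen.preimage (continuous_pi fun ψ => ψ.continuous)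
    have hdmap : ∀ x : X, IPMmap f (fun φ : C(X,ℝ) => φ x) = fun ψ : C(Y,ℝ) => ψ (f x) := by
      intro x; funext ψ; rfl
    have hfx0W : f x0 ∈ W := by
      have hmem : (fun φ : C(X,ℝ) => φ x0) ∈ {μ | IsIPM μ} ∩ U' := by
        refine ⟨isIPM_dirac x0, ?_⟩
        simp only [hU'def, Set.mem_preimage, Set.mem_Ioi]
        rw [hφ1 rfl]
        norm_num
      have : IPMmap f (fun φ : C(X,ℝ) => φ x0) ∈ {ν | IsIPM ν} ∩ V := by
        rw [← hVeq]; exact ⟨_, hmem, rfl⟩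
      rw [hdmap x0] at this
      exact this.2
    refine Filter.mem_of_superset (hWopen.mem_nhds hfx0W) ?_
    intro y hyW
    -- δ_y is in the image, get a lift μ
    have hdy : (fun ψ : C(Y,ℝ) => ψ y) ∈ {ν | IsIPM ν} ∩ V := ⟨isIPM_dirac y, hyW⟩
    rw [← hVeq] at hdy
    obtain ⟨μ, ⟨hμIPM, hμU'⟩, hμmap⟩ := hdy
    -- μ φc > 0 and I(f)μ = δ_y force y ∈ f '' U
    by_contra hyim
    set t : ℝ := μ φc with htdef
    have ht : 0 < t := hμU'
    -- max of φc
    have hXne : Nonempty X := ⟨x0⟩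
    obtain ⟨xm, _, hxm⟩ := isCompact_univ.exists_isMaxOn Set.univ_nonempty
      φc.continuous.continuousOn
    set M : ℝ := φc xm with hMdef
    have hM : ∀ x, φc x ≤ M := fun x => hxm (Set.mem_univ x)
    have htM : t ≤ M := by
      have : φc ≤ ContinuousMap.const X M := fun x => hM x
      have := hμIPM.mono this
      rw [hμIPM.1] at this
      exact this
    set K : Set X := ⇑φc ⁻¹' (Set.Ici (t/2)) with hKdef
    have hKcl : IsClosed K := (isClosed_Ici).preimage φc.continuous
    have hKU : K ⊆ U := by
      intro x hx
      by_contra hxU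
      have : φc x = 0 := hφ0 hxU
      have hx' : t/2 ≤ φc x := hx
      rw [this] at hx'
      linarith
    have hyK : y ∉ ⇑f '' K := by
      rintro ⟨x, hxK, rfl⟩
      exact hyim ⟨x, hKU hxK, rfl⟩
    have hfKcl : IsClosed (⇑f '' K) := (hKcl.isCompact.image f.continuous).isClosed
    obtain ⟨ψ1, hψ10, hψ11, hψ1icc⟩ := exists_continuous_zero_one_of_isClosed
      hfKcl (isClosed_singleton : IsClosed {y}) (Set.disjoint_singleton_right.mpr hyK)
    set ψ : C(Y,ℝ) := (t/2 - M) • ψ1 with hψdef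
    have hkey : φc ≤ (ContinuousMap.const X (t/2)) ⊔ (ψ.comp f + ContinuousMap.const X M) := by
      rw [ContinuousMap.le_def]
      intro x
      simp only [ContinuousMap.sup_apply, ContinuousMap.add_apply, ContinuousMap.comp_apply,
        ContinuousMap.coe_const, Function.const_apply, le_max_iff]
      by_cases hx : t/2 ≤ φc x
      · right
        have : ψ1 (f x) = 0 := hψ10 ⟨x, hx, rfl⟩
        simp only [hψdef, ContinuousMap.smul_apply, this, smul_eq_mul, mul_zero]
        linarith [hM x]
      · left
        push_neg at hx
        exact le_of_lt hx
    have hcontr := hμIPM.mono hkey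
    rw [hμIPM.2.2, hμIPM.1, hμIPM.2.1] at hcontr
    have hν : μ (ψ.comp f) = ψ y := by
      have : IPMmap f μ ψ = ψ y := by rw [hμmap]
      exact this
    rw [hν] at hcontr
    have hψy : ψ y = t/2 - M := by
      simp only [hψdef, ContinuousMap.smul_apply, hψ11 rfl, smul_eq_mul, mul_one]
      norm_num
    rw [hψy] at hcontr
    have : t ≤ t/2 := by
      rw [← htdef] at hcontr
      calc t ≤ max (t/2) (t/2 - M + M) := hcontr
      _ = t/2 := by rw [max_eq_right]; ring_nf; simp
    linarith
  · -- openness of f implies openness of I(f)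
    intro hopen U hU
    classical
    have key : ∀ p : {p : C(X,ℝ) → ℝ // IsIPM p ∧ p ∈ U},
        ∃ N : Set (C(Y,ℝ) → ℝ), IsOpen N ∧ IPMmap f p.1 ∈ N ∧
          ∀ ν', IsIPM ν' → ν' ∈ N →
            ∃ μ', IsIPM μ' ∧ μ' ∈ U ∧ IPMmap f μ' = ν' := by
      rintro ⟨μ, hμIPM, hμU⟩
      obtain ⟨I, u, hIu, hsub⟩ := isOpen_pi_iff.1 hU μ hμU
      have hd : ∀ φ : C(X,ℝ), ∃ d : ℝ, 0 < d ∧ (φ ∈ I → Metric.ball (μ φ) d ⊆ u φ) := by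
        intro φ
        by_cases hφ : φ ∈ I
        · obtain ⟨d, hd0, hdb⟩ := Metric.isOpen_iff.1 (hIu φ hφ).1 _ (hIu φ hφ).2
          exact ⟨d, hd0, fun _ => hdb⟩
        · exact ⟨1, one_pos, fun h => absurd h hφ⟩
      choose d hd0 hdb using hd
      set s : Finset ℝ := insert 1 (I.image d) with hsdef
      have hsne : s.Nonempty := ⟨1, Finset.mem_insert_self _ _⟩
      set ε : ℝ := s.min' hsne with hεdef
      have hε0 : 0 < ε := by
        have := s.min'_mem hsne
        rw [← hεdef] at this
        rcases Finset.mem_insert.1 this with h1 | himg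
        · rw [h1]; norm_num
        · obtain ⟨φ, _, hφ⟩ := Finset.mem_image.1 himg
          rw [← hφ]; exact hd0 φ
      have hεle : ∀ φ ∈ I, ε ≤ d φ := fun φ hφ =>
        s.min'_le _ (Finset.mem_insert_of_mem (Finset.mem_image_of_mem d hφ))
      obtain ⟨T, hT1, hT2, hT3, hT4⟩ :=
        exists_lift_operator f hsurj hopen hμIPM I (half_pos hε0)
      refine ⟨⋂ φ ∈ I, (fun ν' : C(Y,ℝ) → ℝ => ν' (T φ)) ⁻¹'
        Metric.ball (μ ((T φ).comp f)) (ε/2), ?_, ?_, ?_⟩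
      · exact isOpen_biInter_finset fun φ _ =>
          (Metric.isOpen_ball).preimage (continuous_apply (T φ))
      · simp only [Set.mem_iInter, Set.mem_preimage]
        intro φ _
        exact Metric.mem_ball_self (half_pos hε0)
      · intro ν' hν'IPM hν'N
        simp only [Set.mem_iInter, Set.mem_preimage, Metric.mem_ball] at hν'N
        refine ⟨fun φ => ν' (T φ), ⟨?_, ?_, ?_⟩, ?_, ?_⟩
        · intro c
          have hc : ContinuousMap.const X c = (ContinuousMap.const Y c).comp f := rfl
          show ν' (T (ContinuousMap.const X c)) = c
          rw [hc, hT1]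
          exact hν'IPM.1 c
        · intro φ c
          show ν' (T (φ + ContinuousMap.const X c)) = ν' (T φ) + c
          rw [hT2, hν'IPM.2.1]
        · intro φ ψ
          show ν' (T (φ ⊔ ψ)) = max (ν' (T φ)) (ν' (T ψ))
          rw [hT3, hν'IPM.2.2]
        · -- membership in U
          apply hsub
          intro φ hφ
          have h1 := hν'N φ hφ
          have h2 := hT4 φ hφ
          refine hdb φ hφ ?_
          rw [Metric.mem_ball] at *
          rw [Real.dist_eq] at *
          have : |ν' (T φ) - μ φ| < ε := by
            calc |ν' (T φ) - μ φ|
                ≤ |ν' (T φ) - μ ((T φ).comp f)| + |μ ((T φ).comp f) - μ φ| := abs_sub_le _ _ _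
              _ < ε/2 + ε/2 := add_lt_add h1 h2
              _ = ε := by ring
          exact lt_of_lt_of_le this (hεle φ hφ)
        · funext ψ
          show ν' (T (ψ.comp f)) = ν' ψ
          rw [hT1]
    choose N hNopen hNmem hNlift using key
    refine ⟨⋃ p, N p, isOpen_iUnion hNopen, ?_⟩
    ext ν
    constructor
    · rintro ⟨μ, hμ, rfl⟩
      refine ⟨hμ.1.map f, Set.mem_iUnion.2 ⟨⟨μ, hμ⟩, hNmem _⟩⟩
    · rintro ⟨hνIPM, hνV⟩
      obtain ⟨p, hp⟩ := Set.mem_iUnion.1 hνV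
      obtain ⟨μ', hμ'IPM, hμ'U, hμ'map⟩ := hNlift p ν hνIPM hp
      exact ⟨μ', ⟨hμ'IPM, hμ'U⟩, hμ'map⟩
end Main


/-- for a continuous surjection `f` of compact Hausdorff spaces, the map
`I(f) : I(X) → I(Y)` is open iff `f` is open. Openness of `I(f)` is expressed via the
subspace topologies on `I(X) ⊆ ℝ^{C(X)}` and `I(Y) ⊆ ℝ^{C(Y)}`. -/
theorem ipm_map_open_iff_open {X Y : Type*} [TopologicalSpace X] [CompactSpace X]
    [T2Space X] [TopologicalSpace Y] [CompactSpace Y] [T2Space Y]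
    (f : C(X, Y)) (hsurj : Function.Surjective f) :
    (∀ U : Set (C(X, ℝ) → ℝ), IsOpen U →
      ∃ V : Set (C(Y, ℝ) → ℝ), IsOpen V ∧
        IPMmap f '' ({μ | IsIPM μ} ∩ U) = {ν | IsIPM ν} ∩ V) ↔
    IsOpenMap f := by
  exact ipm_main f hsurj
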